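/- arXiv:1110.6555 — 3 statements merged into one kernel-verified Lean document; each statement's English description precedes it below -/
import Mathlib

section
/- Loeb's lemma: Let X and Y be sets with families ⟨U_i⟩_{i ∈ I} of subsets of X and ⟨V_j⟩_{j ∈ J} of subsets of Y, with ⟨U_i⟩ compact in the sense that every cover of X by sets U_i, i ∈ A ⊆ I, has a finite subcover, and such that for each x there is an i with x ∈ U_i. Let A ⊆ I × J be a set such that no finite subset a ⊆ A satisfies X × Y = ⋃_{(i,j) ∈ a} U_i × V_j. Then there exists x ∈ X such that, setting B = {j ∈ J : ∃ i, x ∈ U_i and (i,j) ∈ A}, no finite subset b ⊆ B satisfies Y = ⋃_{j ∈ b} V_j. -/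
/-- Finite intersections refine: there is a single `U k` inside all `U i`, `i ∈ s`. -/
lemma stmt14_aux {X I : Type*} (U : I → Set X)
    (hcov : ∀ x : X, ∃ i : I, x ∈ U i)
    (hbase : ∀ (x : X) (i i' : I), x ∈ U i ∩ U i' → ∃ k : I, x ∈ U k ∧ U k ⊆ U i ∩ U i')
    (s : Finset I) (x : X) (hx : ∀ i ∈ s, x ∈ U i) :
    ∃ k : I, x ∈ U k ∧ ∀ i ∈ s, U k ⊆ U i := by
  classical
  induction s using Finset.induction_on with
  | empty =>
      obtain ⟨i, hi⟩ := hcov x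
      exact ⟨i, hi, by simp⟩
  | insert _ _ hnot ih =>
      rename_i j t
      obtain ⟨k, hk, hks⟩ := ih (fun i hi => hx i (Finset.mem_insert_of_mem hi))
      obtain ⟨k', hk', hk's⟩ := hbase x j k ⟨hx j (Finset.mem_insert_self _ _), hk⟩
      refine ⟨k', hk', fun i hi => ?_⟩
      rcases Finset.mem_insert.mp hi with rfl | hi
      · exact fun y hy => (hk's hy).1
      · exact fun y hy => hks i hi ((hk's hy).2)

/-- Loeb's lemma: if `⟨U_i⟩` is a compact base-like family on `X` and `A ⊆ I × J`
indexes rectangles with no finite subfamily covering `X × Y`, then there is `x ∈ X`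
such that no finite subfamily of `{V_j : ∃ i, x ∈ U i ∧ (i,j) ∈ A}` covers `Y`. -/
theorem stmt14 {X Y I J : Type*} (U : I → Set X) (V : J → Set Y)
    (hcov : ∀ x : X, ∃ i : I, x ∈ U i)
    (hbase : ∀ (x : X) (i i' : I), x ∈ U i ∩ U i' → ∃ k : I, x ∈ U k ∧ U k ⊆ U i ∩ U i')
    (hcomp : ∀ A : Set I, (⋃ i ∈ A, U i) = Set.univ →
      ∃ a : Finset I, ↑a ⊆ A ∧ (⋃ i ∈ a, U i) = Set.univ)
    (A : Set (I × J))
    (hA : ∀ a : Finset (I × J), ↑a ⊆ A → (⋃ p ∈ a, U p.1 ×ˢ V p.2) ≠ Set.univ) :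
    ∃ x : X, ∀ b : Finset J,
      (↑b ⊆ {j : J | ∃ i : I, x ∈ U i ∧ (i, j) ∈ A}) → (⋃ j ∈ b, V j) ≠ Set.univ := by
  classical
  by_contra h
  push_neg at h
  choose f hf1 hf2 using h
  -- for each x and each j ∈ f x, choose an index i
  have hg : ∀ x : X, ∃ g : J → I, ∀ j ∈ f x, x ∈ U (g j) ∧ (g j, j) ∈ A := by
    intro x
    have : ∀ j : J, ∃ i : I, j ∈ f x → (x ∈ U i ∧ (i, j) ∈ A) := by
      intro j
      by_cases hj : j ∈ f x
      · obtain ⟨i, hi⟩ := hf1 x hj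
        exact ⟨i, fun _ => hi⟩
      · obtain ⟨i, hi⟩ := hcov x
        exact ⟨i, fun hc => absurd hc hj⟩
    choose g hgspec using this
    exact ⟨g, fun j hj => hgspec j hj⟩
  choose g hgspec using hg
  -- refine: k x with x ∈ U (k x) ⊆ U (g x j) for all j ∈ f x
  have hk : ∀ x : X, ∃ k : I, x ∈ U k ∧ ∀ j ∈ f x, U k ⊆ U (g x j) := by
    intro x
    obtain ⟨k, hk1, hk2⟩ := stmt14_aux U hcov hbase ((f x).image (g x)) x
      (by
        intro i hi
        obtain ⟨j, hj, rfl⟩ := Finset.mem_image.mp hi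
        exact (hgspec x j hj).1)
    exact ⟨k, hk1, fun j hj => hk2 _ (Finset.mem_image_of_mem _ hj)⟩
  choose k hk1 hk2 using hk
  have hcover : (⋃ i ∈ Set.range k, U i) = Set.univ := by
    ext x
    simp only [Set.mem_iUnion, Set.mem_univ, iff_true]
    exact ⟨k x, ⟨x, rfl⟩, hk1 x⟩
  obtain ⟨a, ha1, ha2⟩ := hcomp _ hcover
  -- choose a witness x for each i ∈ a
  have hw : ∀ i : I, ∃ x : X, i ∈ a → k x = i := by
    intro i
    by_cases hi : i ∈ a
    · obtain ⟨x, hx⟩ := ha1 hi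
      exact ⟨x, fun _ => hx⟩
    · have hX : Nonempty X := by
        by_contra hX
        apply hA ∅ (by simp)
        ext p
        exact (hX ⟨p.1⟩).elim
      exact ⟨hX.some, fun hc => absurd hc hi⟩
  choose w hw using hw
  -- assemble the finite set of pairs
  set s : Finset (I × J) := a.biUnion (fun i => (f (w i)).image (fun j => (g (w i) j, j)))
  have hsA : ↑s ⊆ A := by
    intro p hp
    simp only [s, Finset.coe_biUnion, Set.mem_iUnion, Finset.mem_coe,
      Finset.mem_image] at hp
    obtain ⟨i, -, j, hj, rfl⟩ := hp
    exact (hgspec (w i) j hj).2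
  apply hA s hsA
  ext ⟨x, y⟩
  simp only [Set.mem_iUnion, Set.mem_univ, iff_true]
  have hx : x ∈ ⋃ i ∈ a, U i := ha2 ▸ Set.mem_univ x
  simp only [Set.mem_iUnion] at hx
  obtain ⟨i, hia, hxi⟩ := hx
  have hki : k (w i) = i := hw i hia
  have hy : y ∈ ⋃ j ∈ f (w i), V j := (hf2 (w i)) ▸ Set.mem_univ y
  simp only [Set.mem_iUnion] at hy
  obtain ⟨j, hj, hyj⟩ := hy
  refine ⟨(g (w i) j, j), ?_, ?_, hyj⟩
  · exact Finset.mem_biUnion.mpr ⟨i, hia, Finset.mem_image_of_mem _ hj⟩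
  · have : x ∈ U (k (w i)) := by rw [hki]; exact hxi
    exact hk2 (w i) j hj this
end

section
/- Let T be a subtree of the full binary tree {0,1}^{<ω} with no infinite branches, let X be the set of dead-ends of T (nodes of T with no extension in T), and for each t ∈ T let B_t = {x ∈ X : t is not an initial segment of x}. Then: (1) the family ⟨B_t⟩_{t ∈ T} is compact, i.e., if X = ⋃_{t ∈ A} B_t for some A ⊆ T then finitely many B_t, t ∈ A, already cover X; and (2) each singleton {x} for x ∈ X is a finite intersection of sets B_t, namely {x} = ⋂_{t ∈ b_x} B_t where b_x = {(x↾i)⌢(1−x(i)) : i < |x|} ∩ T. -/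
/-! Auxiliary development: a binary tree (as a prefix-closed set of `List Bool`)
with no infinite branch is finite (König's lemma, classically). -/

private lemma stmt18_getD_append (l : List Bool) (b : Bool) :
    (l ++ [b]).getD l.length false = b := by
  rw [List.getD_eq_getElem?_getD, List.getElem?_concat_length]; rfl

private lemma stmt18_take_succ (l : List Bool) (n : ℕ) (h : n < l.length) :
    l.take (n+1) = l.take n ++ [l.getD n false] := by
  rw [List.take_succ, List.getElem?_eq_getElem h, List.getD_eq_getElem l _ h]
  rfl

open Classical in
/-- The extension bit chosen greedily towards an infinite part of `T`. -/
noncomputable def stmt18c (T : Set (List Bool)) (p : List Bool) : Bool :=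
  if {u ∈ T | p ++ [true] <+: u}.Infinite then true else false

/-- Greedy branch through `T`. -/
noncomputable def stmt18h (T : Set (List Bool)) : ℕ → List Bool
  | 0 => []
  | n + 1 => stmt18h T n ++ [stmt18c T (stmt18h T n)]

private lemma stmt18h_length (T : Set (List Bool)) : ∀ n, (stmt18h T n).length = n
  | 0 => rfl
  | n + 1 => by simp [stmt18h, stmt18h_length T n]

private lemma stmt18h_getD (T : Set (List Bool)) (n : ℕ) :
    (stmt18h T (n+1)).getD n false = stmt18c T (stmt18h T n) := by
  have h := stmt18_getD_append (stmt18h T n) (stmt18c T (stmt18h T n))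
  rw [stmt18h_length] at h
  conv_lhs => rw [stmt18h]
  exact h

private lemma stmt18_inf (T : Set (List Bool)) (hT : T.Infinite) :
    ∀ n, {u ∈ T | stmt18h T n <+: u}.Infinite := by
  intro n
  induction n with
  | zero =>
    have he : {u ∈ T | stmt18h T 0 <+: u} = T := by
      ext u; simp [stmt18h]
    rwa [he]
  | succ n ih =>
    set p := stmt18h T n with hp
    have hsub : {u ∈ T | p <+: u} ⊆
        {p} ∪ ({u ∈ T | p ++ [true] <+: u} ∪ {u ∈ T | p ++ [false] <+: u}) := by
      rintro u ⟨hu, l, rfl⟩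
      cases l with
      | nil => simp
      | cons b l =>
        cases b
        · exact Or.inr (Or.inr ⟨hu, l, by simp⟩)
        · exact Or.inr (Or.inl ⟨hu, l, by simp⟩)
    by_cases hc : {u ∈ T | p ++ [true] <+: u}.Infinite
    · have he : stmt18h T (n+1) = p ++ [true] := by
        rw [stmt18h, ← hp, stmt18c, if_pos hc]
      rw [he]; exact hc
    · have hf : {u ∈ T | p ++ [false] <+: u}.Infinite := by
        by_contra h
        rw [Set.not_infinite] at h
        have hc' := Set.not_infinite.mp hc
        exact ih (((Set.finite_singleton p).union (hc'.union h)).subset hsub)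
      have he : stmt18h T (n+1) = p ++ [false] := by
        rw [stmt18h, ← hp, stmt18c, if_neg hc]
      rw [he]; exact hf

private lemma stmt18_ofFn (T : Set (List Bool)) :
    ∀ n, (List.ofFn fun k : Fin n => (stmt18h T (k+1)).getD k false) = stmt18h T n := by
  intro n
  induction n with
  | zero => rfl
  | succ n ih =>
    rw [List.ofFn_succ', List.concat_eq_append]
    simp only [Fin.coe_castSucc, Fin.val_last]
    rw [ih, stmt18h_getD]
    conv_rhs => rw [stmt18h]

private lemma stmt18_finite (T : Set (List Bool))
    (htree : ∀ t ∈ T, ∀ u : List Bool, u <+: t → u ∈ T)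
    (hwf : ¬ ∃ g : ℕ → Bool, ∀ n : ℕ, (List.ofFn fun k : Fin n => g k) ∈ T) :
    T.Finite := by
  by_contra hT
  have hT' : T.Infinite := hT
  refine hwf ⟨fun n => (stmt18h T (n+1)).getD n false, fun n => ?_⟩
  have hmem : stmt18h T n ∈ T := by
    obtain ⟨u, hu, hpre⟩ := (stmt18_inf T hT' n).nonempty
    exact htree u hu _ hpre
  have h := stmt18_ofFn T n
  simpa only [h] using hmem

private lemma stmt18_split (x y : List Bool) (hxy : ¬ x <+: y) (hyx : ¬ y <+: x) :
    ∃ i, i < x.length ∧ y.take (i+1) = x.take i ++ [!x.getD i false] := by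
  have hex : ∃ n, x.take n ≠ y.take n := by
    by_contra h; push_neg at h
    apply hxy
    have h' := (h x.length).symm
    rw [List.take_length] at h'
    exact h' ▸ List.take_prefix _ _
  classical
  have hm : x.take (Nat.find hex) ≠ y.take (Nat.find hex) := Nat.find_spec hex
  have hm0 : Nat.find hex ≠ 0 := by
    intro h; apply hm; rw [h]; simp
  obtain ⟨i, hieq⟩ := Nat.exists_eq_succ_of_ne_zero hm0
  rw [hieq] at hm
  have heq : x.take i = y.take i :=
    not_ne_iff.mp (by simpa using Nat.find_min hex (hieq ▸ Nat.lt_succ_self i))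
  have hix : i < x.length := by
    by_contra h; push_neg at h
    have hx : x.take i = x := List.take_of_length_le h
    apply hxy; rw [← hx, heq]; exact List.take_prefix _ _
  have hiy : i < y.length := by
    by_contra h; push_neg at h
    have hy : y.take i = y := List.take_of_length_le h
    apply hyx; rw [← hy, ← heq]; exact List.take_prefix _ _
  have hxs := stmt18_take_succ x i hix
  have hys := stmt18_take_succ y i hiy
  have hne : x.getD i false ≠ y.getD i false := by
    intro h; apply hm; rw [hxs, hys, heq, h]
  have hflip : y.getD i false = !x.getD i false := by
    revert hne
    cases x.getD i false <;> cases y.getD i false <;> simp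
  exact ⟨i, hix, by rw [hys, heq, hflip]⟩

/-- For a well-founded binary tree `T` with set of dead-ends `X` and subbasic sets
`B t = {x ∈ X : ¬ t ⊑ x}`: (1) the family `⟨B t⟩_{t ∈ T}` is compact, and (2) each
singleton `{x}` for `x ∈ X` is the intersection over the siblings of `x` in `T`. -/
theorem stmt18 (T : Set (List Bool))
    (htree : ∀ t ∈ T, ∀ u : List Bool, u <+: t → u ∈ T)
    (hwf : ¬ ∃ g : ℕ → Bool, ∀ n : ℕ, (List.ofFn fun k : Fin n => g k) ∈ T) :
    (∀ A : Set (List Bool), A ⊆ T →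
        ({x ∈ T | ∀ u ∈ T, x <+: u → u = x} ⊆
          ⋃ t ∈ A, {x ∈ {x ∈ T | ∀ u ∈ T, x <+: u → u = x} | ¬ t <+: x}) →
        ∃ a : Finset (List Bool), ↑a ⊆ A ∧
          {x ∈ T | ∀ u ∈ T, x <+: u → u = x} ⊆
            ⋃ t ∈ a, {x ∈ {x ∈ T | ∀ u ∈ T, x <+: u → u = x} | ¬ t <+: x}) ∧
    (∀ x ∈ {x ∈ T | ∀ u ∈ T, x <+: u → u = x},
      ({x} : Set (List Bool)) =
        {x ∈ T | ∀ u ∈ T, x <+: u → u = x} ∩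
          ⋂ t ∈ {t | t ∈ T ∧ ∃ i < x.length, t = x.take i ++ [!x.getD i false]},
            {x ∈ {x ∈ T | ∀ u ∈ T, x <+: u → u = x} | ¬ t <+: x}) := by
  have hTfin : T.Finite := stmt18_finite T htree hwf
  set X := {x ∈ T | ∀ u ∈ T, x <+: u → u = x} with hXdef
  constructor
  · -- compactness
    intro A hA hcov
    have hXfin : X.Finite := hTfin.subset fun x hx => hx.1
    have hpt : ∀ x, x ∈ X → ∃ t, t ∈ A ∧ x ∈ {x ∈ X | ¬ t <+: x} := by
      intro x hx
      obtain ⟨t, htA, hxt⟩ := Set.mem_iUnion₂.mp (hcov hx)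
      exact ⟨t, htA, hxt⟩
    choose f hf1 hf2 using hpt
    refine ⟨hXfin.toFinset.attach.image
      (fun z => f z.1 (hXfin.mem_toFinset.mp z.2)), ?_, ?_⟩
    · intro t ht
      simp only [Finset.coe_image, Set.mem_image, Finset.mem_coe,
        Finset.mem_attach] at ht
      obtain ⟨z, _, rfl⟩ := ht
      exact hf1 _ _
    · intro x hx
      rw [Set.mem_iUnion₂]
      refine ⟨f x hx, Finset.mem_image.mpr
        ⟨⟨x, hXfin.mem_toFinset.mpr hx⟩, Finset.mem_attach _ _, rfl⟩, hf2 x hx⟩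
  · -- singletons
    intro x hx
    ext y
    constructor
    · rintro rfl
      refine ⟨hx, Set.mem_iInter₂.mpr ?_⟩
      rintro t ⟨htT, i, hi, rfl⟩
      refine ⟨hx, fun hpre => ?_⟩
      have hlen : (y.take i ++ [!y.getD i false]).length = i + 1 := by
        simp [List.length_take, Nat.min_eq_left hi.le]
      have heq := List.prefix_iff_eq_take.mp hpre
      rw [hlen, stmt18_take_succ y i hi] at heq
      simp at heq
    · rintro ⟨hyX, hyI⟩
      simp only [Set.mem_singleton_iff]
      by_cases h1 : x <+: y
      · exact hx.2 y hyX.1 h1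
      by_cases h2 : y <+: x
      · exact (hyX.2 x hx.1 h2).symm
      obtain ⟨i, hix, hti⟩ := stmt18_split x y h1 h2
      have htT : y.take (i+1) ∈ T := htree y hyX.1 _ (List.take_prefix _ _)
      have hmem : y.take (i+1) ∈
          {t | t ∈ T ∧ ∃ i < x.length, t = x.take i ++ [!x.getD i false]} :=
        ⟨htT, i, hix, hti⟩
      exact absurd (List.take_prefix (i+1) y) (Set.mem_iInter₂.mp hyI _ hmem).2
end

section
/- Deficiency sets are hypersimple (classical computability version): let f : ℕ → ℕ be an injective computable function whose range is not computable, and let D_f = {x : ∃ y > x, f(y) < f(x)} be its deficiency set. Then D_f is computably enumerable, coinfinite, and hypersimple: there is no computable sequence ⟨d_n⟩ of pairwise disjoint finite sets (given by canonical indices) such that d_n ⊄ D_f for every n — equivalently, for every computable disjoint strong array ⟨d_n⟩ there is some n with d_n ⊆ D_f. -/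
namespace Stmt19Aux

/-- Bounded existential search: `bex f y B = true ↔ ∃ x ≤ B, f x = y`. -/
def bex (f : ℕ → ℕ) (y B : ℕ) : Bool :=
  Nat.rec (motive := fun _ => Bool) (decide (f 0 = y))
    (fun n ih => ih || decide (f (n + 1) = y)) B

theorem bex_zero (f : ℕ → ℕ) (y : ℕ) : bex f y 0 = decide (f 0 = y) := rfl

theorem bex_succ (f : ℕ → ℕ) (y B : ℕ) :
    bex f y (B + 1) = (bex f y B || decide (f (B + 1) = y)) := rfl

theorem bex_iff (f : ℕ → ℕ) (y B : ℕ) : bex f y B = true ↔ ∃ x ≤ B, f x = y := by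
  induction B with
  | zero =>
    rw [bex_zero, decide_eq_true_iff]
    constructor
    · intro h; exact ⟨0, le_refl 0, h⟩
    · rintro ⟨x, hx, h⟩; interval_cases x; exact h
  | succ B ih =>
    rw [bex_succ, Bool.or_eq_true, ih, decide_eq_true_iff]
    constructor
    · rintro (⟨x, hx, h⟩ | h)
      · exact ⟨x, hx.trans (Nat.le_succ B), h⟩
      · exact ⟨B + 1, le_refl _, h⟩
    · rintro ⟨x, hx, h⟩
      rcases Nat.le_succ_iff_eq_or_le.mp hx with h' | h'
      · subst h'; exact Or.inr h
      · exact Or.inl ⟨x, h', h⟩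

theorem bex_computable {f : ℕ → ℕ} (hf : Computable f) :
    Computable₂ (bex f) := by
  have heq : Computable₂ (fun a b : ℕ => decide (a = b)) :=
    (Primrec.eq (α := ℕ)).decide.to_comp
  have hg : Computable (fun p : ℕ × ℕ => decide (f 0 = p.1)) :=
    heq.comp (Computable.const (f 0)) Computable.fst
  have hh : Computable₂ (fun (p : ℕ × ℕ) (q : ℕ × Bool) =>
      q.2 || decide (f (q.1 + 1) = p.1)) := by
    have h1 : Computable (fun r : (ℕ × ℕ) × ℕ × Bool => r.2.2) :=
      Computable.snd.comp Computable.snd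
    have h2 : Computable (fun r : (ℕ × ℕ) × ℕ × Bool => decide (f (r.2.1 + 1) = r.1.1)) :=
      heq.comp (hf.comp (Computable.succ.comp (Computable.fst.comp Computable.snd)))
        (Computable.fst.comp Computable.fst)
    exact (Computable.cond h1 (Computable.const true) h2).to₂.of_eq (fun r => by
      rcases r with ⟨⟨y, B⟩, n, b⟩; cases b <;> simp)
  exact (Computable.nat_rec (Computable.snd) hg hh).to₂.of_eq (fun p => rfl)

def ball (f : ℕ → ℕ) (l : List ℕ) (y k : ℕ) : Bool :=
  Nat.rec (motive := fun _ => Bool) true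
    (fun i ih => ih && decide (y ≤ f (l.getI i))) k

theorem ball_succ (f : ℕ → ℕ) (l : List ℕ) (y k : ℕ) :
    ball f l y (k + 1) = (ball f l y k && decide (y ≤ f (l.getI k))) := rfl

theorem ball_iff_aux (f : ℕ → ℕ) (l : List ℕ) (y k : ℕ) :
    ball f l y k = true ↔ ∀ i < k, y ≤ f (l.getI i) := by
  induction k with
  | zero => simp [ball]
  | succ k ih =>
    rw [ball_succ, Bool.and_eq_true, ih, decide_eq_true_iff]
    constructor
    · rintro ⟨h1, h2⟩ i hi
      rcases Nat.lt_succ_iff_lt_or_eq.mp hi with h | h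
      · exact h1 i h
      · exact h ▸ h2
    · intro h
      exact ⟨fun i hi => h i (Nat.lt_succ_of_lt hi), h k (Nat.lt_succ_self k)⟩

theorem ball_iff (f : ℕ → ℕ) (l : List ℕ) (y : ℕ) :
    ball f l y l.length = true ↔ ∀ x ∈ l, y ≤ f x := by
  rw [ball_iff_aux]
  constructor
  · intro h x hx
    obtain ⟨i, hi, rfl⟩ := List.mem_iff_getElem.mp hx
    have := h i hi
    rwa [List.getI_eq_getElem _ hi] at this
  · intro h i hi
    rw [List.getI_eq_getElem _ hi]
    exact h _ (List.getElem_mem hi)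

theorem ball_computable {f : ℕ → ℕ} (hf : Computable f) {d : ℕ → List ℕ}
    (hd : Computable d) :
    Computable₂ (fun y n => ball f (d n) y (d n).length) := by
  have hle : Computable₂ (fun a b : ℕ => decide (a ≤ b)) := Primrec.nat_le.decide.to_comp
  have hgetI : Computable₂ (@List.getI ℕ _) := Primrec.list_getI.to_comp
  have hlen : Computable (fun p : ℕ × ℕ => (d p.2).length) :=
    (Primrec.list_length.to_comp).comp (hd.comp Computable.snd)
  have hh : Computable₂ (fun (p : ℕ × ℕ) (q : ℕ × Bool) =>
      q.2 && decide (p.1 ≤ f ((d p.2).getI q.1))) := by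
    have h1 : Computable (fun r : (ℕ × ℕ) × ℕ × Bool => r.2.2) :=
      Computable.snd.comp Computable.snd
    have h2 : Computable (fun r : (ℕ × ℕ) × ℕ × Bool =>
        decide (r.1.1 ≤ f ((d r.1.2).getI r.2.1))) :=
      hle.comp (Computable.fst.comp Computable.fst)
        (hf.comp (hgetI.comp (hd.comp (Computable.snd.comp Computable.fst))
          (Computable.fst.comp Computable.snd)))
    exact (Computable.cond h1 h2 (Computable.const false)).to₂.of_eq (fun r => by
      rcases r with ⟨⟨y, n⟩, i, b⟩; cases b <;> simp)
  exact (Computable.nat_rec hlen (Computable.const true) hh).to₂.of_eq (fun p => rfl)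

def mx (l : List ℕ) (k : ℕ) : ℕ :=
  Nat.rec (motive := fun _ => ℕ) 0 (fun i ih => max ih (l.getI i)) k

theorem mx_succ (l : List ℕ) (k : ℕ) : mx l (k + 1) = max (mx l k) (l.getI k) := rfl

theorem le_mx (l : List ℕ) : ∀ x ∈ l, x ≤ mx l l.length := by
  have aux : ∀ k, ∀ i < k, l.getI i ≤ mx l k := by
    intro k
    induction k with
    | zero => intro i hi; omega
    | succ k ih =>
      intro i hi
      rw [mx_succ]
      rcases Nat.lt_succ_iff_lt_or_eq.mp hi with h | h
      · exact le_max_of_le_left (ih i h)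
      · exact h ▸ le_max_right _ _
  intro x hx
  obtain ⟨i, hi, rfl⟩ := List.mem_iff_getElem.mp hx
  have := aux l.length i hi
  rwa [List.getI_eq_getElem _ hi] at this

theorem mx_computable {d : ℕ → List ℕ} (hd : Computable d) :
    Computable (fun n => mx (d n) (d n).length) := by
  have hgetI : Computable₂ (@List.getI ℕ _) := Primrec.list_getI.to_comp
  have hlen : Computable (fun n : ℕ => (d n).length) :=
    (Primrec.list_length.to_comp).comp hd
  have hh : Computable₂ (fun (n : ℕ) (q : ℕ × ℕ) => max q.2 ((d n).getI q.1)) :=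
    (Primrec.nat_max.to_comp.comp
      (Computable.snd.comp Computable.snd)
      (hgetI.comp (hd.comp Computable.fst) (Computable.fst.comp Computable.snd))).to₂
  exact (Computable.nat_rec hlen (Computable.const 0) hh).of_eq (fun n => rfl)

end Stmt19Aux

open Stmt19Aux in
/-- The deficiency set of an injective computable function with non-computable range
is c.e., coinfinite, and hypersimple: every computable disjoint strong array has a
member entirely inside the deficiency set. -/
theorem stmt19 (f : ℕ → ℕ) (hf : Computable f) (hinj : Function.Injective f)
    (hrange : ¬ ComputablePred (fun y => y ∈ Set.range f)) :
    REPred (fun x : ℕ => ∃ y : ℕ, x < y ∧ f y < f x) ∧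
    {x : ℕ | ¬ ∃ y : ℕ, x < y ∧ f y < f x}.Infinite ∧
    (∀ d : ℕ → List ℕ, Computable d →
      (∀ m n : ℕ, m ≠ n → ∀ x : ℕ, x ∈ d m → x ∉ d n) →
      ∃ n : ℕ, ∀ x ∈ d n, ∃ y : ℕ, x < y ∧ f y < f x) := by
  classical
  refine ⟨?_, ?_, ?_⟩
  · -- RePred
    have hlt : Computable₂ (fun a b : ℕ => decide (a < b)) := Primrec.nat_lt.decide.to_comp
    have hq : Computable₂ (fun x y : ℕ => decide (x < y) && decide (f y < f x)) := by
      have h1 : Computable (fun p : ℕ × ℕ => decide (p.1 < p.2)) :=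
        hlt.comp Computable.fst Computable.snd
      have h2 : Computable (fun p : ℕ × ℕ => decide (f p.2 < f p.1)) :=
        hlt.comp (hf.comp Computable.snd) (hf.comp Computable.fst)
      exact (Computable.cond h1 h2 (Computable.const false)).to₂.of_eq (fun p => by
        rcases p with ⟨x, y⟩; rcases h : decide (x < y) <;> simp [h])
    have hr : Partrec fun x : ℕ =>
        (Nat.rfind fun y => (Part.some (decide (x < y) && decide (f y < f x)) : Part Bool)).map
          (fun _ => ()) :=
      (Partrec.rfind hq.partrec₂).map ((Computable.const ()).comp Computable.fst).to₂
    apply hr.of_eq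
    intro x
    apply Part.ext
    intro u
    cases u
    constructor
    · intro hmem
      rw [Part.mem_map_iff] at hmem
      obtain ⟨n, hn, -⟩ := hmem
      have hspec := Nat.rfind_spec hn
      rw [Part.mem_some_iff] at hspec
      have : x < n ∧ f n < f x := by
        have h' := hspec.symm
        rw [Bool.and_eq_true, decide_eq_true_iff, decide_eq_true_iff] at h'
        exact h'
      exact Part.mem_assert ⟨n, this⟩ (Part.mem_some ())
    · intro hu
      rw [Part.mem_assert_iff] at hu
      obtain ⟨⟨y, hxy, hfy⟩, -⟩ := hu
      have hdom : (Nat.rfind fun n =>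
          (Part.some (decide (x < n) && decide (f n < f x)) : Part Bool)).Dom := by
        refine Nat.rfind_dom.mpr ?_
        refine ⟨y, ?_, fun _ => trivial⟩
        rw [Part.mem_some_iff]
        simp [hxy, hfy]
      obtain ⟨n, hn⟩ := Part.dom_iff_mem.mp hdom
      rw [Part.mem_map_iff]
      exact ⟨n, hn, rfl⟩
  · -- coinfinite
    apply Set.infinite_of_forall_exists_gt
    intro a
    have hPm : ∃ v, ∃ x, a + 1 ≤ x ∧ f x = v := ⟨f (a + 1), a + 1, le_refl _, rfl⟩
    obtain ⟨x, hxm, hfx⟩ := Nat.find_spec hPm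
    refine ⟨x, ?_, by omega⟩
    rintro ⟨y, hxy, hfy⟩
    exact Nat.find_min hPm (m := f y) (by omega) ⟨y, by omega, rfl⟩
  · -- hypersimplicity
    intro d hd hdisj
    by_contra hcon
    push_neg at hcon
    -- counting: for every y some block has all f-values ≥ y
    have hex : ∀ y, ∃ n, ∀ x ∈ d n, y ≤ f x := by
      intro y
      by_contra hno
      push_neg at hno
      choose x hx hfx using hno
      have hxinj : Function.Injective x := by
        intro m n hmn
        by_contra hne
        exact hdisj m n hne (x m) (hx m) (hmn ▸ hx n)
      have hcard : (Finset.range (y + 1)).card ≤ (Finset.range y).card := by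
        apply Finset.card_le_card_of_injOn (fun n => f (x n))
        · intro n _
          simp only [Finset.mem_coe, Finset.mem_range]
          exact hfx n
        · intro m _ n _ h
          exact hxinj (hinj h)
      simp at hcard
    let idx : ℕ → ℕ := fun y => Nat.find (hex y)
    have hidx_spec : ∀ y, ∀ x ∈ d (idx y), y ≤ f x := fun y => Nat.find_spec (hex y)
    have hidx_comp : Computable idx := by
      have hr : Partrec fun y : ℕ =>
          Nat.rfind fun n => (Part.some (ball f (d n) y (d n).length) : Part Bool) :=
        Partrec.rfind (ball_computable hf hd).partrec₂
      apply hr.of_eq_tot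
      intro y
      refine Nat.mem_rfind.mpr ?_
      constructor
      · rw [Part.mem_some_iff]
        exact ((ball_iff f (d (idx y)) y).mpr (hidx_spec y)).symm
      · intro m hm
        rw [Part.mem_some_iff]
        have := Nat.find_min (hex y) hm
        have hb : ball f (d m) y (d m).length ≠ true := fun hb =>
          this ((ball_iff f (d m) y).mp hb)
        exact (Bool.eq_false_iff.mpr hb).symm
    let B : ℕ → ℕ := fun y => mx (d (idx y)) (d (idx y)).length
    have hB : Computable B := (mx_computable hd).comp hidx_comp
    let g : ℕ → Bool := fun y => bex f y (B y)
    have hg : Computable g := (bex_computable hf).comp Computable.id hB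
    apply hrange
    rw [ComputablePred.computable_iff]
    refine ⟨g, hg, ?_⟩
    funext y
    apply propext
    constructor
    · rintro ⟨z, rfl⟩
      obtain ⟨x0, hx0mem, hx0nd⟩ := hcon (idx (f z))
      have hyx0 : f z ≤ f x0 := hidx_spec (f z) x0 hx0mem
      have hzx0 : z ≤ x0 := by
        by_contra hgt
        push_neg at hgt
        rcases lt_or_eq_of_le hyx0 with hlt | heq
        · have := hx0nd z hgt; omega
        · have hz : z = x0 := hinj heq
          omega
      show bex f (f z) (B (f z)) = true
      rw [bex_iff]
      exact ⟨z, hzx0.trans (le_mx _ x0 hx0mem), rfl⟩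
    · intro hgy
      have : bex f y (B y) = true := hgy
      rw [bex_iff] at this
      obtain ⟨x, -, hx⟩ := this
      exact ⟨x, hx⟩
end
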